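/- Let H : ℝ^d → ℝ be convex and equal to the biconjugate of its Legendre transform H*, and let u₀ : ℝ^d → ℝ with Legendre transform u₀*. Then for every x ∈ ℝ^d and t > 0, sup_{p ∈ ℝ^d} [⟨p, x⟩ + t·H(p) − u₀*(p)] = sup_{q ∈ ℝ^d} [u₀**(x + t q) − t·H*(q)], where the suprema are taken in the extended reals. -/

import Mathlib

open scoped RealInnerProductSpace

section helpers
variable {ι : Type*}

lemma my_iSup_add_coe (h : ι → EReal) (c : ℝ) : (⨆ i, h i) + (c : EReal) = ⨆ i, (h i + c) := by
  apply le_antisymm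
  · rw [← EReal.le_sub_iff_add_le (Or.inl (EReal.coe_ne_bot c)) (Or.inl (EReal.coe_ne_top c))]
    refine iSup_le fun i => ?_
    rw [EReal.le_sub_iff_add_le (Or.inl (EReal.coe_ne_bot c)) (Or.inl (EReal.coe_ne_top c))]
    exact le_iSup (fun i => h i + (c : EReal)) i
  · exact iSup_le fun i => add_le_add_left (le_iSup h i) _

lemma my_iSup_sub [Nonempty ι] (h : ι → EReal) (c : EReal) (hc : c ≠ ⊥) :
    (⨆ i, h i) - c = ⨆ i, (h i - c) := by
  induction c with
  | bot => exact absurd rfl hc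
  | coe c =>
    simp only [sub_eq_add_neg, ← EReal.coe_neg]
    exact my_iSup_add_coe h (-c)
  | top =>
    have : ∀ a : EReal, a - ⊤ = ⊥ := fun a => by rw [sub_eq_add_neg]; simp
    simp only [this]
    simp

lemma my_iSup_coe_mul (h : ι → EReal) (t : ℝ) (ht : 0 < t) :
    (t : EReal) * (⨆ i, h i) = ⨆ i, (t : EReal) * h i := by
  have ht' : (0 : EReal) < (t : EReal) := by exact_mod_cast ht
  apply le_antisymm
  · rw [mul_comm, ← EReal.le_div_iff_mul_le ht' (EReal.coe_ne_top t)]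
    refine iSup_le fun i => ?_
    rw [EReal.le_div_iff_mul_le ht' (EReal.coe_ne_top t), mul_comm]
    exact le_iSup (fun i => (t : EReal) * h i) i
  · refine iSup_le fun i => ?_
    rw [mul_comm, mul_comm (t : EReal) (⨆ i, h i)]
    exact mul_le_mul_of_nonneg_right (le_iSup h i) ht'.le

end helpers

lemma my_mul_ne_bot (t : ℝ) (ht : 0 < t) (c : EReal) (hc : c ≠ ⊥) : (t : EReal) * c ≠ ⊥ := by
  induction c with
  | bot => exact absurd rfl hc
  | coe s => rw [← EReal.coe_mul]; exact EReal.coe_ne_bot _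
  | top => rw [EReal.coe_mul_top_of_pos ht]; simp

lemma my_rearrange (t r u : ℝ) (ht : 0 < t) (c : EReal) (hc : c ≠ ⊥) :
    (t : EReal) * ((r : EReal) - c) + (u : EReal) =
      ((u + t * r : ℝ) : EReal) - (t : EReal) * c := by
  induction c with
  | bot => exact absurd rfl hc
  | coe s =>
    rw [← EReal.coe_sub, ← EReal.coe_mul, ← EReal.coe_mul, ← EReal.coe_add, ← EReal.coe_sub]
    norm_cast
    ring
  | top =>
    have e1 : ((r : ℝ) : EReal) - ⊤ = ⊥ := by rw [sub_eq_add_neg]; simp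
    have e2 : (t : EReal) * (⊥ : EReal) = ⊥ := EReal.coe_mul_bot_of_pos ht
    rw [e1, e2, EReal.bot_add, EReal.coe_mul_top_of_pos ht, sub_eq_add_neg]
    simp

theorem stmt2 {d : ℕ} (H : EuclideanSpace ℝ (Fin d) → ℝ)
    (hH : ConvexOn ℝ Set.univ H)
    (Hstar : EuclideanSpace ℝ (Fin d) → EReal)
    (hHstar : ∀ q, Hstar q = ⨆ p, (((inner ℝ q p : ℝ) - H p : ℝ) : EReal))
    (hbi : ∀ p, (H p : EReal) = ⨆ q, (((inner ℝ p q : ℝ) : EReal) - Hstar q))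
    (u₀ : EuclideanSpace ℝ (Fin d) → ℝ)
    (u₀star : EuclideanSpace ℝ (Fin d) → EReal)
    (hu₀star : ∀ q, u₀star q = ⨆ p, (((inner ℝ q p : ℝ) - u₀ p : ℝ) : EReal))
    (u₀bi : EuclideanSpace ℝ (Fin d) → EReal)
    (hu₀bi : ∀ x, u₀bi x = ⨆ q, (((inner ℝ x q : ℝ) : EReal) - u₀star q))
    (x : EuclideanSpace ℝ (Fin d)) (t : ℝ) (ht : 0 < t) :
    (⨆ p, (((inner ℝ p x : ℝ) + t * H p : EReal) - u₀star p)) =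
      ⨆ q, (u₀bi (x + t • q) - (t : EReal) * Hstar q) := by
  have hub : ∀ p, u₀star p ≠ ⊥ := by
    intro p
    rw [hu₀star p]
    exact (lt_of_lt_of_le (EReal.bot_lt_coe _)
      (le_iSup (fun p' => (((inner ℝ p p' : ℝ) - u₀ p' : ℝ) : EReal)) 0)).ne'
  have hHb : ∀ q, Hstar q ≠ ⊥ := by
    intro q
    rw [hHstar q]
    exact (lt_of_lt_of_le (EReal.bot_lt_coe _)
      (le_iSup (fun p' => (((inner ℝ q p' : ℝ) - H p' : ℝ) : EReal)) 0)).ne'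
  have keyA : ∀ p,
      (((inner ℝ p x : ℝ) + t * H p : EReal) - u₀star p) =
        ⨆ q, ((((inner ℝ p x : ℝ) + t * (inner ℝ p q : ℝ) : ℝ) : EReal)
          - (t : EReal) * Hstar q - u₀star p) := by
    intro p
    have A1 : ((inner ℝ p x : ℝ) + t * H p : EReal) =
        ⨆ q, ((((inner ℝ p x : ℝ) + t * (inner ℝ p q : ℝ) : ℝ) : EReal)
          - (t : EReal) * Hstar q) := by
      have h2 : (t : EReal) * (H p : EReal) + ((inner ℝ p x : ℝ) : EReal) =
          ⨆ q, ((t : EReal) * (((inner ℝ p q : ℝ) : EReal) - Hstar q)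
            + ((inner ℝ p x : ℝ) : EReal)) := by
        rw [hbi p, my_iSup_coe_mul _ t ht]
        exact my_iSup_add_coe _ _
      calc ((inner ℝ p x : ℝ) + t * H p : EReal)
          = (t : EReal) * (H p : EReal) + ((inner ℝ p x : ℝ) : EReal) := by
            rw [add_comm]
        _ = _ := by
            rw [h2]
            exact iSup_congr fun q => my_rearrange t _ _ ht _ (hHb q)
    rw [A1, my_iSup_sub _ _ (hub p)]
  have keyB : ∀ q,
      (u₀bi (x + t • q) - (t : EReal) * Hstar q) =
        ⨆ p, ((((inner ℝ p x : ℝ) + t * (inner ℝ p q : ℝ) : ℝ) : EReal)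
          - (t : EReal) * Hstar q - u₀star p) := by
    intro q
    have B1 : u₀bi (x + t • q) =
        ⨆ p, ((((inner ℝ p x : ℝ) + t * (inner ℝ p q : ℝ) : ℝ) : EReal) - u₀star p) := by
      rw [hu₀bi]
      refine iSup_congr fun p => ?_
      rw [inner_add_left, real_inner_smul_left, real_inner_comm x p, real_inner_comm q p]
    rw [B1, my_iSup_sub _ _ (my_mul_ne_bot t ht _ (hHb q))]
    refine iSup_congr fun p => ?_
    rw [sub_eq_add_neg, sub_eq_add_neg, sub_eq_add_neg, sub_eq_add_neg, add_right_comm]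
  calc (⨆ p, (((inner ℝ p x : ℝ) + t * H p : EReal) - u₀star p))
      = ⨆ p, ⨆ q, ((((inner ℝ p x : ℝ) + t * (inner ℝ p q : ℝ) : ℝ) : EReal)
          - (t : EReal) * Hstar q - u₀star p) := iSup_congr keyA
    _ = ⨆ q, ⨆ p, ((((inner ℝ p x : ℝ) + t * (inner ℝ p q : ℝ) : ℝ) : EReal)
          - (t : EReal) * Hstar q - u₀star p) := iSup_comm
    _ = _ := (iSup_congr keyB).symm
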